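/- Let L ≥ 0 be an integer and a₀, …, a_L ∈ ℂ. Then there exists an even Schwartz function u ∈ 𝓢(ℝ) such that u^{(2l)}(0) = a_l for every 0 ≤ l ≤ L, and such that the Fourier transform û has support contained in the open interval (−1, 1). -/

import Mathlib

open MeasureTheory Matrix Finset Complex SchwartzMap
open scoped FourierTransform Real ContDiff

noncomputable section

/-- An explicit even bump function supported in `[-1, 1]`. -/
def stmt17Psi (x : ℝ) : ℝ := expNegInvGlue (1 - x ^ 2)

lemma stmt17Psi_contDiff : ContDiff ℝ ∞ stmt17Psi :=
  expNegInvGlue.contDiff.comp (contDiff_const.sub (contDiff_id.pow 2))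

lemma stmt17Psi_nonneg (x : ℝ) : 0 ≤ stmt17Psi x := expNegInvGlue.nonneg _

lemma stmt17Psi_even (x : ℝ) : stmt17Psi (-x) = stmt17Psi x := by simp [stmt17Psi]

lemma stmt17Psi_pos {x : ℝ} (h : x ^ 2 < 1) : 0 < stmt17Psi x :=
  expNegInvGlue.pos_of_pos (by linarith)

lemma stmt17Psi_zero {x : ℝ} (h : 1 ≤ x ^ 2) : stmt17Psi x = 0 :=
  expNegInvGlue.zero_of_nonpos (by linarith)

/-- A smooth compactly supported function is a Schwartz function. -/
def stmt17MkCS (f : ℝ → ℂ) (hf : ContDiff ℝ ∞ f) (h : HasCompactSupport f) :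
    SchwartzMap ℝ ℂ where
  toFun := f
  smooth' := hf
  decay' := by
    intro k n
    have h1 : HasCompactSupport (iteratedFDeriv ℝ n f) := h.iteratedFDeriv n
    have hcont : Continuous fun x : ℝ => ‖x‖ ^ k * ‖iteratedFDeriv ℝ n f x‖ := by
      exact (continuous_norm.pow k).mul
        ((hf.continuous_iteratedFDeriv (by exact_mod_cast le_top)).norm)
    have h3 : HasCompactSupport fun x : ℝ => ‖x‖ ^ k * ‖iteratedFDeriv ℝ n f x‖ :=
      HasCompactSupport.mul_left h1.norm
    obtain ⟨C, hC⟩ := h3.exists_bound_of_continuous hcont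
    refine ⟨C, fun x => ?_⟩
    have := hC x
    rwa [Real.norm_of_nonneg (by positivity)] at this

section Main

variable (L : ℕ)

/-- scaling factors -/
def stmt17d (j : Fin (L + 1)) : ℝ := 2 * ((j : ℕ) + 1)

lemma stmt17d_pos (j : Fin (L + 1)) : 0 < stmt17d L j := by
  have : (0:ℝ) < (j : ℕ) + 1 := by positivity
  simp only [stmt17d]; linarith

lemma stmt17d_ge_two (j : Fin (L + 1)) : 2 ≤ stmt17d L j := by
  have : (1:ℝ) ≤ (j : ℕ) + 1 := by
    have : (0:ℝ) ≤ (j : ℕ) := Nat.cast_nonneg _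
    linarith
  simp only [stmt17d]; linarith

lemma stmt17_scaled_zero (j : Fin (L + 1)) {x : ℝ} (hx : x ∉ Set.Icc (-(1:ℝ)/2) (1/2)) :
    stmt17Psi (stmt17d L j * x) = 0 := by
  have hx' : 1/2 < |x| := by
    simp only [Set.mem_Icc, not_and_or, not_le] at hx
    rcases hx with h | h
    · rw [abs_of_neg (by linarith)]; linarith
    · rw [abs_of_pos (by linarith)]; linarith
  have hd := stmt17d_ge_two L j
  have habs : 1 ≤ |stmt17d L j * x| := by
    rw [abs_mul, abs_of_pos (stmt17d_pos L j)]
    nlinarith [abs_nonneg x]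
  apply stmt17Psi_zero
  calc (1:ℝ) = 1 * 1 := by ring
    _ ≤ |stmt17d L j * x| * |stmt17d L j * x| :=
        mul_le_mul habs habs (by norm_num) (abs_nonneg _)
    _ = (stmt17d L j * x) ^ 2 := by rw [← abs_mul, abs_mul_self]; ring

lemma stmt17_scaled_hcs (j : Fin (L + 1)) :
    HasCompactSupport fun x : ℝ => stmt17Psi (stmt17d L j * x) :=
  HasCompactSupport.intro (isCompact_Icc (a := (-(1:ℝ)/2)) (b := 1/2))
    fun _ hx => stmt17_scaled_zero L j hx

lemma stmt17_integrable_scaled (l : ℕ) (j : Fin (L + 1)) :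
    Integrable fun x : ℝ => x ^ (2 * l) * stmt17Psi (stmt17d L j * x) := by
  apply Continuous.integrable_of_hasCompactSupport
  · exact (continuous_pow _).mul
      (stmt17Psi_contDiff.continuous.comp (continuous_const.mul continuous_id))
  · exact HasCompactSupport.mul_left (stmt17_scaled_hcs L j)

/-- The scaled bump functions, as Schwartz maps. -/
def stmt17G (j : Fin (L + 1)) : SchwartzMap ℝ ℂ :=
  stmt17MkCS (fun x => (stmt17Psi (stmt17d L j * x) : ℂ))
    (by
      have : ContDiff ℝ ∞ fun x : ℝ => stmt17Psi (stmt17d L j * x) :=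
        stmt17Psi_contDiff.comp (contDiff_const.mul contDiff_id)
      exact Complex.ofRealCLM.contDiff.comp this)
    (by
      apply HasCompactSupport.intro (isCompact_Icc (a := (-(1:ℝ)/2)) (b := 1/2))
      intro x hx
      simp [stmt17_scaled_zero L j hx])

lemma stmt17G_apply (j : Fin (L + 1)) (x : ℝ) :
    stmt17G L j x = (stmt17Psi (stmt17d L j * x) : ℂ) := rfl

lemma stmt17G_zero (j : Fin (L + 1)) {x : ℝ} (hx : x ∉ Set.Icc (-(1:ℝ)/2) (1/2)) :
    stmt17G L j x = 0 := by
  simp [stmt17G_apply, stmt17_scaled_zero L j hx]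

/-- even moments of the bump -/
def stmt17m (l : ℕ) : ℝ := ∫ x : ℝ, x ^ (2 * l) * stmt17Psi x

lemma stmt17Psi_hcs : HasCompactSupport stmt17Psi := by
  apply HasCompactSupport.intro (isCompact_Icc (a := (-1:ℝ)) (b := 1))
  intro x hx
  apply stmt17Psi_zero
  simp only [Set.mem_Icc, not_and_or, not_le] at hx
  rcases hx with h | h <;> nlinarith

lemma stmt17_integrable_pow_psi (l : ℕ) :
    Integrable fun x : ℝ => x ^ (2 * l) * stmt17Psi x := by
  apply Continuous.integrable_of_hasCompactSupport
  · exact (continuous_pow _).mul stmt17Psi_contDiff.continuous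
  · exact HasCompactSupport.mul_left stmt17Psi_hcs

lemma stmt17m_pos (l : ℕ) : 0 < stmt17m l := by
  rw [stmt17m, integral_pos_iff_support_of_nonneg]
  · have hsub : Set.Ioo (0:ℝ) 1 ⊆ Function.support fun x => x ^ (2 * l) * stmt17Psi x := by
      intro x hx
      have h1 : 0 < x := hx.1
      have h2 : x < 1 := hx.2
      have : 0 < x ^ (2 * l) * stmt17Psi x :=
        mul_pos (pow_pos h1 _) (stmt17Psi_pos (by nlinarith))
      exact ne_of_gt this
    calc (0 : ENNReal) < volume (Set.Ioo (0:ℝ) 1) := by simp [Real.volume_Ioo]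
      _ ≤ _ := measure_mono hsub
  · intro x
    exact mul_nonneg ((even_two_mul l).pow_nonneg x) (stmt17Psi_nonneg x)
  · exact stmt17_integrable_pow_psi l

/-- moments of the scaled bumps -/
lemma stmt17_moment (l : ℕ) (d : ℝ) (hd : 0 < d) :
    (∫ x : ℝ, x ^ (2 * l) * stmt17Psi (d * x)) = (d⁻¹) ^ (2 * l + 1) * stmt17m l := by
  have key : ∀ x : ℝ, x ^ (2 * l) * stmt17Psi (d * x)
      = (d⁻¹) ^ (2 * l) * ((d * x) ^ (2 * l) * stmt17Psi (d * x)) := by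
    intro x
    have hd' : d ^ (2 * l) ≠ 0 := pow_ne_zero _ (ne_of_gt hd)
    rw [mul_pow]
    rw [← mul_assoc, ← mul_assoc, ← mul_pow, inv_mul_cancel₀ (ne_of_gt hd), one_pow, one_mul]
  simp_rw [key]
  rw [integral_const_mul, MeasureTheory.Measure.integral_comp_mul_left
    (fun y => y ^ (2 * l) * stmt17Psi y) d]
  rw [abs_of_pos (inv_pos.mpr hd), smul_eq_mul, stmt17m]
  ring

/-- cast of the real moment to the complex matrix entry -/
lemma stmt17_cast (d m : ℝ) (l : ℕ) (hd : d ≠ 0) :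
    ((d⁻¹ ^ (2 * l + 1) * m : ℝ) : ℂ) =
      (m : ℂ) * (((d : ℝ) : ℂ)⁻¹ * ((((d : ℝ) : ℂ))⁻¹ ^ 2) ^ l) := by
  push_cast
  ring

end Main

end

theorem stmt17 (L : ℕ) (a : ℕ → ℂ) :
    ∃ u : SchwartzMap ℝ ℂ,
      (∀ x : ℝ, u (-x) = u x) ∧
      (∀ l : ℕ, l ≤ L → iteratedDeriv (2 * l) (⇑u) 0 = a l) ∧
      tsupport (FourierTransform.fourier (⇑u : ℝ → ℂ)) ⊆ Set.Ioo (-1) 1 := by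
  classical
  -- the complex scaling factors
  set t : Fin (L + 1) → ℂ := fun j => ((stmt17d L j : ℝ) : ℂ)⁻¹ with ht
  have ht_ne : ∀ j, t j ≠ 0 := by
    intro j
    simp only [ht, ne_eq, inv_eq_zero, Complex.ofReal_eq_zero]
    exact ne_of_gt (stmt17d_pos L j)
  have ht_inj : Function.Injective fun j => t j ^ 2 := by
    intro i j hij
    have hmono : ∀ i j : Fin (L + 1), stmt17d L i = stmt17d L j → i = j := by
      intro i j h
      have : ((i : ℕ) : ℝ) = ((j : ℕ) : ℝ) := by
        simp only [stmt17d] at h; linarith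
      exact Fin.ext (Nat.cast_injective this)
    apply hmono
    have h1 : ((stmt17d L i : ℝ) : ℂ) ≠ 0 := by
      simp only [ne_eq, Complex.ofReal_eq_zero]; exact ne_of_gt (stmt17d_pos L i)
    have h2 : ((stmt17d L j : ℝ) : ℂ) ≠ 0 := by
      simp only [ne_eq, Complex.ofReal_eq_zero]; exact ne_of_gt (stmt17d_pos L j)
    simp only [ht, ← inv_pow] at hij
    have hsq : ((stmt17d L i : ℝ) : ℂ) ^ 2 = ((stmt17d L j : ℝ) : ℂ) ^ 2 := by
      have := congrArg (fun z => z⁻¹) hij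
      simpa [inv_inv] using this
    have : (stmt17d L i : ℝ) ^ 2 = (stmt17d L j : ℝ) ^ 2 := by
      exact_mod_cast hsq
    nlinarith [stmt17d_pos L i, stmt17d_pos L j]
  -- the moment matrix
  set A : Matrix (Fin (L + 1)) (Fin (L + 1)) ℂ :=
    Matrix.of (fun l j => ((stmt17m l : ℝ) : ℂ) * (t j * (t j ^ 2) ^ (l : ℕ))) with hA
  have hAdet : IsUnit A.det := by
    have hfact : A = Matrix.diagonal (fun l : Fin (L + 1) => ((stmt17m l : ℝ) : ℂ)) *
        ((Matrix.vandermonde fun j => t j ^ 2)ᵀ * Matrix.diagonal t) := by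
      ext l j
      simp [hA, Matrix.mul_apply, Matrix.diagonal, Finset.sum_ite_eq, Finset.sum_ite_eq',
        Matrix.vandermonde, Matrix.transpose_apply, mul_comm, mul_assoc, mul_left_comm]
    rw [hfact, Matrix.det_mul, Matrix.det_mul, Matrix.det_diagonal, Matrix.det_diagonal,
      Matrix.det_transpose, isUnit_iff_ne_zero]
    refine mul_ne_zero ?_ (mul_ne_zero ?_ ?_)
    · exact Finset.prod_ne_zero_iff.mpr fun l _ => by
        simpa using ne_of_gt (stmt17m_pos l)
    · exact Matrix.det_vandermonde_ne_zero_iff.mpr ht_inj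
    · exact Finset.prod_ne_zero_iff.mpr fun j _ => ht_ne j
  -- the constant (-2πi)^(2l)
  set K : ℕ → ℂ := fun l => (-(2 * (π : ℂ) * Complex.I)) ^ (2 * l) with hK
  have hK_ne : ∀ l, K l ≠ 0 := by
    intro l
    apply pow_ne_zero
    simp only [ne_eq, neg_eq_zero, mul_eq_zero, not_or]
    refine ⟨⟨by norm_num, ?_⟩, Complex.I_ne_zero⟩
    exact_mod_cast Real.pi_ne_zero
  -- solve the linear system
  set target : Fin (L + 1) → ℂ := fun l => a (l : ℕ) / K (l : ℕ) with htarget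
  set b : Fin (L + 1) → ℂ := A⁻¹ *ᵥ target with hb
  have hsolve : A *ᵥ b = target := by
    rw [hb, Matrix.mulVec_mulVec, Matrix.mul_nonsing_inv A hAdet, Matrix.one_mulVec]
  -- the function on the Fourier side
  set φ : SchwartzMap ℝ ℂ := ∑ j : Fin (L + 1), b j • stmt17G L j with hφ
  have hφ_apply : ∀ x : ℝ, φ x = ∑ j : Fin (L + 1), b j * stmt17G L j x := by
    intro x
    have : (⇑φ : ℝ → ℂ) = ∑ j : Fin (L + 1), ⇑(b j • stmt17G L j) :=
      map_sum (FunLike.coeAddMonoidHom (SchwartzMap ℝ ℂ) ℝ ℂ) _ Finset.univ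
    rw [this]
    simp [SchwartzMap.smul_apply, smul_eq_mul]
  have hφ_even : ∀ x : ℝ, φ (-x) = φ x := by
    intro x
    rw [hφ_apply, hφ_apply]
    congr 1
    ext j
    rw [stmt17G_apply, stmt17G_apply,
      show stmt17d L j * -x = -(stmt17d L j * x) by ring, stmt17Psi_even]
  have hφ_zero : ∀ x : ℝ, x ∉ Set.Icc (-(1:ℝ)/2) (1/2) → φ x = 0 := by
    intro x hx
    rw [hφ_apply]
    apply Finset.sum_eq_zero
    intro j _
    rw [stmt17G_zero L j hx, mul_zero]
  have hφ_hcs : HasCompactSupport (⇑φ) :=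
    HasCompactSupport.intro isCompact_Icc hφ_zero
  -- the candidate function
  set u : SchwartzMap ℝ ℂ := (FourierTransform.fourierCLE ℂ (SchwartzMap ℝ ℂ)).symm φ with hu
  have hu_coe : (⇑u : ℝ → ℂ) = 𝓕 (⇑φ) := by
    rw [hu]
    ext x
    rw [SchwartzMap.fourierTransformCLE_symm_apply, SchwartzMap.fourierInv_coe,
      Real.fourierInv_eq_fourier_comp_neg]
    simp_rw [hφ_even]
  have hFu : 𝓕 (⇑u) = ⇑φ := by
    have h1 : FourierTransform.fourierCLE ℂ (SchwartzMap ℝ ℂ) u = φ := by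
      rw [hu]; exact (FourierTransform.fourierCLE ℂ (SchwartzMap ℝ ℂ)).apply_symm_apply φ
    calc 𝓕 (⇑u)
        = ⇑(FourierTransform.fourierCLE ℂ (SchwartzMap ℝ ℂ) u) := by
          exact (SchwartzMap.fourier_coe u).symm
      _ = ⇑φ := by rw [h1]
  refine ⟨u, ?_, ?_, ?_⟩
  · -- evenness
    intro x
    rw [show ((u (-x) : ℂ)) = (⇑u) (-x) from rfl, show ((u x : ℂ)) = (⇑u) x from rfl]
    rw [hu_coe]
    rw [← Real.fourierInv_eq_fourier_neg,
      Real.fourierInv_eq_fourier_comp_neg]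
    simp_rw [hφ_even]
  · -- derivatives
    intro l hl
    have hint : ∀ n : ℕ, (n : ℕ∞) ≤ (⊤ : ℕ∞) →
        Integrable (fun x : ℝ => x ^ n • (⇑φ) x) := by
      intro n _
      apply Continuous.integrable_of_hasCompactSupport
      · exact ((continuous_pow n).smul φ.continuous)
      · exact hφ_hcs.smul_left (f := fun x : ℝ => x ^ n)
    have hderiv : iteratedDeriv (2 * l) (𝓕 (⇑φ)) =
        𝓕 (fun x : ℝ => (-2 * (π:ℂ) * Complex.I * x) ^ (2 * l) • (⇑φ) x) :=
      Real.iteratedDeriv_fourier (N := ⊤) hint le_top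
    rw [hu_coe, hderiv]
    -- evaluate the Fourier integral at 0
    have heval : 𝓕
        (fun x : ℝ => (-2 * (π:ℂ) * Complex.I * x) ^ (2 * l) • (⇑φ) x) 0
        = ∫ x : ℝ, (-2 * (π:ℂ) * Complex.I * x) ^ (2 * l) • (⇑φ) x := by
      rw [Real.fourier_real_eq]
      simp
    rw [heval]
    -- compute the integral
    have hintegrand : ∀ x : ℝ, (-2 * (π:ℂ) * Complex.I * x) ^ (2 * l) • (⇑φ) x
        = K l * ∑ j : Fin (L + 1), b j * ((x:ℂ) ^ (2 * l) * stmt17G L j x) := by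
      intro x
      rw [smul_eq_mul, hφ_apply, Finset.mul_sum, Finset.mul_sum]
      congr 1
      ext j
      have : (-2 * (π:ℂ) * Complex.I * x) ^ (2 * l)
          = K l * (x:ℂ) ^ (2 * l) := by
        rw [hK, ← mul_pow]
        ring_nf
      rw [this]
      ring
    simp_rw [hintegrand]
    rw [integral_const_mul]
    have hjint : ∀ j : Fin (L + 1),
        Integrable fun x : ℝ => b j * ((x:ℂ) ^ (2 * l) * stmt17G L j x) := by
      intro j
      apply Integrable.const_mul
      apply Continuous.integrable_of_hasCompactSupport
      · exact (continuous_ofReal.pow _).mul (stmt17G L j).continuous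
      · apply HasCompactSupport.mul_left
        apply HasCompactSupport.intro (isCompact_Icc (a := (-(1:ℝ)/2)) (b := 1/2))
        intro x hx
        exact stmt17G_zero L j hx
    rw [integral_finset_sum _ (fun j _ => hjint j)]
    -- each integral is a matrix entry
    have hmomC : ∀ j : Fin (L + 1),
        (∫ x : ℝ, b j * ((x:ℂ) ^ (2 * l) * stmt17G L j x)) = b j * A ⟨l, by omega⟩ j := by
      intro j
      rw [integral_const_mul]
      congr 1
      have hstep : (∫ x : ℝ, (x:ℂ) ^ (2 * l) * stmt17G L j x)
          = ∫ x : ℝ, ((x ^ (2 * l) * stmt17Psi (stmt17d L j * x) : ℝ) : ℂ) := by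
        congr 1
        ext x
        rw [stmt17G_apply]
        push_cast
        ring
      have hreal : (∫ x : ℝ, ((x ^ (2 * l) * stmt17Psi (stmt17d L j * x) : ℝ) : ℂ))
          = ((∫ x : ℝ, x ^ (2 * l) * stmt17Psi (stmt17d L j * x) : ℝ) : ℂ) := by
        have := Complex.ofRealCLM.integral_comp_comm (stmt17_integrable_scaled L l j)
        simpa using this
      rw [hstep, hreal, stmt17_moment l (stmt17d L j) (stmt17d_pos L j)]
      have hentry : A ⟨l, by omega⟩ j
          = ((stmt17m l : ℝ) : ℂ) * (t j * (t j ^ 2) ^ l) := rfl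
      rw [hentry, ht]
      exact stmt17_cast (stmt17d L j) (stmt17m l) l (ne_of_gt (stmt17d_pos L j))
    simp_rw [hmomC]
    have hsum : (∑ j : Fin (L + 1), b j * A ⟨l, by omega⟩ j) = (A *ᵥ b) ⟨l, by omega⟩ := by
      rw [Matrix.mulVec, dotProduct]
      exact Finset.sum_congr rfl fun j _ => mul_comm _ _
    rw [hsum, hsolve]
    have htgt : target ⟨l, by omega⟩ = a l / K l := rfl
    rw [htgt, mul_div_cancel₀ _ (hK_ne l)]
  · -- support of the Fourier transform
    rw [hFu]
    have h1 : tsupport (⇑φ) ⊆ Set.Icc (-(1:ℝ)/2) (1/2) := by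
      apply closure_minimal _ isClosed_Icc
      intro x hx
      by_contra hc
      exact hx (hφ_zero x hc)
    refine h1.trans ?_
    intro x hx
    simp only [Set.mem_Icc] at hx
    constructor <;> [linarith [hx.1]; linarith [hx.2]]
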